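/- Every piecewise syndetic subset of a commutative semigroup (S,+) is a J-set. -/

import Mathlib

/-- Sum of `f` over a nonempty finite set `α` in a commutative semigroup. -/
def sgSum {ι S : Type*} [LinearOrder ι] [AddCommSemigroup S]
    (α : Finset ι) (f : ι → S) (h : α.Nonempty) : S :=
  ((α.erase (α.min' h)).sort (· ≤ ·)).foldl (fun x i => x + f i) (f (α.min' h))

/-- `A` is a J-set: for every finite set of sequences there are `a` and a
nonempty finite `H ⊆ ℕ` with `a + ∑_{n ∈ H} f n ∈ A` for each `f`. -/
def JSet {S : Type*} [AddCommSemigroup S] (A : Set S) : Prop :=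
  ∀ F : Finset (ℕ → S), ∃ (a : S) (H : Finset ℕ) (hH : H.Nonempty),
    ∀ f ∈ F, a + sgSum H f hH ∈ A

/-- `A` is thick: every finite set can be shifted into `A`. -/
def Thick {S : Type*} [AddCommSemigroup S] (A : Set S) : Prop :=
  ∀ E : Finset S, ∃ x : S, ∀ e ∈ E, e + x ∈ A

/-- `A` is syndetic: finitely many shifts `-t + A` cover `S`. -/
def Syndetic {S : Type*} [AddCommSemigroup S] (A : Set S) : Prop :=
  ∃ F : Finset S, ∀ x : S, ∃ t ∈ F, t + x ∈ A

/-- `A` is piecewise syndetic: finitely many shifts `-t + A` form a thick set. -/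
def PiecewiseSyndetic {S : Type*} [AddCommSemigroup S] (A : Set S) : Prop :=
  ∃ F : Finset S, Thick {x : S | ∃ t ∈ F, t + x ∈ A}

/-- `A` is a combinatorially rich (CR) set. -/
def CRSet {S : Type*} [AddCommSemigroup S] (A : Set S) : Prop :=
  ∀ n : ℕ, ∃ r : ℕ, ∀ M : Fin r → Fin n → S,
    ∃ (α : Finset (Fin r)) (hα : α.Nonempty) (s : S),
      ∀ j : Fin n, s + sgSum α (fun i => M i j) hα ∈ A

/-- `iterAdd a b k = a + b + ⋯ + b` (`k` copies of `b`). -/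
def iterAdd {S : Type*} [AddSemigroup S] (a b : S) : ℕ → S
  | 0 => a
  | k + 1 => iterAdd a b k + b

lemma coe_foldl {ι S : Type*} [AddCommSemigroup S] (f : ι → S) (L : List ι) (x : S) :
    ((L.foldl (fun x i => x + f i) x : S) : WithZero S)
      = ↑x + (L.map fun i => ((f i : WithZero S))).sum := by
  induction L generalizing x with
  | nil => simp
  | cons a L ih =>
      simp only [List.foldl_cons, List.map_cons, List.sum_cons, ih, WithZero.coe_add]
      rw [add_assoc]

lemma coe_sgSum {ι S : Type*} [LinearOrder ι] [AddCommSemigroup S]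
    (α : Finset ι) (f : ι → S) (h : α.Nonempty) :
    ((sgSum α f h : S) : WithZero S) = ∑ i ∈ α, (f i : WithZero S) := by
  unfold sgSum
  rw [coe_foldl]
  have h2 : ((((α.erase (α.min' h)).sort (· ≤ ·)).map fun i => ((f i : WithZero S))).sum)
      = ∑ i ∈ α.erase (α.min' h), (f i : WithZero S) := by
    rw [Finset.sum_eq_multiset_sum, ← Finset.sort_eq (α.erase (α.min' h)) (· ≤ ·),
      Multiset.map_coe, Multiset.sum_coe]
  rw [h2]
  exact Finset.add_sum_erase _ (fun i => (f i : WithZero S)) (α.min'_mem h)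

/-- Every piecewise syndetic subset of a commutative semigroup is a J-set. -/
theorem piecewiseSyndetic_isJSet {S : Type*} [AddCommSemigroup S] (A : Set S)
    (hA : PiecewiseSyndetic A) : JSet A := by
  classical
  obtain ⟨G, hG⟩ := hA
  intro F
  -- S is nonempty
  obtain ⟨x0, -⟩ := hG ∅
  -- G is nonempty
  obtain ⟨y0, hy0⟩ := hG {x0}
  obtain ⟨t0, ht0G, -⟩ := hy0 x0 (Finset.mem_singleton_self x0)
  -- dispose of the trivial case F = ∅
  rcases F.eq_empty_or_nonempty with hF | hF
  · exact ⟨x0, {0}, Finset.singleton_nonempty 0, by simp [hF]⟩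
  haveI : Nonempty {f // f ∈ F} := ⟨⟨hF.choose, hF.choose_spec⟩⟩
  haveI : Nonempty {t // t ∈ G} := ⟨⟨t0, ht0G⟩⟩
  -- Hales–Jewett
  obtain ⟨ι, hιF, hHJ⟩ :=
    Combinatorics.Line.exists_mono_in_high_dimension {f // f ∈ F} {t // t ∈ G}
  haveI := hιF
  haveI : Nonempty ι := by
    obtain ⟨l, -⟩ := hHJ (fun _ => Classical.arbitrary {t // t ∈ G})
    obtain ⟨i, -⟩ := l.proper
    exact ⟨i⟩
  set N := Fintype.card ι with hN
  let e : ι ≃ Fin N := Fintype.equivFin ι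
  haveI : Nonempty (Fin N) := ⟨e (Classical.arbitrary ι)⟩
  -- the value of a word
  let g : (ι → {f // f ∈ F}) → Fin N → S := fun w i' => ((w (e.symm i') : ℕ → S)) i'.val
  let σ : (ι → {f // f ∈ F}) → S := fun w => sgSum Finset.univ (g w) Finset.univ_nonempty
  -- thickness
  obtain ⟨x, hx⟩ := hG (Finset.univ.image σ)
  have hch : ∀ w : ι → {f // f ∈ F}, ∃ t : {t // t ∈ G}, (t : S) + (σ w + x) ∈ A := by
    intro w
    obtain ⟨t, htG, hta⟩ := hx (σ w) (Finset.mem_image_of_mem σ (Finset.mem_univ w))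
    exact ⟨⟨t, htG⟩, hta⟩
  choose C hC using hch
  obtain ⟨l, tc, htc⟩ := hHJ C
  -- the variable positions
  set H' : Finset (Fin N) :=
    Finset.univ.filter (fun i' => l.idxFun (e.symm i') = none) with hH'def
  have hH' : H'.Nonempty := by
    obtain ⟨i, hi⟩ := l.proper
    exact ⟨e i, by simp [hH'def, hi]⟩
  set H : Finset ℕ := H'.image (fun i' => (i'.val : ℕ)) with hHdef
  have hH : H.Nonempty := hH'.image _
  -- the value of the constant part
  let d : Fin N → S :=
    fun i' => (((l.idxFun (e.symm i')).getD (Classical.arbitrary _) : ℕ → S)) i'.val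
  -- decomposition of the value of a point of the line
  have hval : ∀ j : {f // f ∈ F}, ((σ (l j) : S) : WithZero S)
      = (∑ i' ∈ H', (((j : ℕ → S) i'.val : S) : WithZero S))
        + ∑ i' ∈ H'ᶜ, ((d i' : S) : WithZero S) := by
    intro j
    show ((sgSum Finset.univ (g (l j)) Finset.univ_nonempty : S) : WithZero S) = _
    rw [coe_sgSum, ← Finset.sum_add_sum_compl H']
    congr 1
    · refine Finset.sum_congr rfl fun i' hi' => ?_
      have h1 : l.idxFun (e.symm i') = none := by
        simpa [hH'def] using hi'
      show ((((l.idxFun (e.symm i')).getD j : ℕ → S)) i'.val : WithZero S) = _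
      rw [h1, Option.getD_none]
    · refine Finset.sum_congr rfl fun i' hi' => ?_
      have h1 : l.idxFun (e.symm i') ≠ none := by
        simp only [Finset.mem_compl, hH'def, Finset.mem_filter, Finset.mem_univ,
          true_and] at hi'
        exact hi'
      obtain ⟨b, hb⟩ := Option.ne_none_iff_exists'.mp h1
      show ((((l.idxFun (e.symm i')).getD j : ℕ → S)) i'.val : WithZero S)
        = ((((l.idxFun (e.symm i')).getD (Classical.arbitrary _) : ℕ → S)) i'.val : WithZero S)
      rw [hb, Option.getD_some, Option.getD_some]
  -- the sum over H equals the sum over H'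
  have hsumH : ∀ f : ℕ → S, ((sgSum H f hH : S) : WithZero S)
      = ∑ i' ∈ H', ((f i'.val : S) : WithZero S) := by
    intro f
    rw [coe_sgSum, hHdef]
    exact Finset.sum_image (fun a _ b _ h => Fin.val_injective h)
  by_cases hK : H'ᶜ = (∅ : Finset (Fin N))
  · -- no constant part
    refine ⟨(tc : S) + x, H, hH, fun f hf => ?_⟩
    set j : {f // f ∈ F} := ⟨f, hf⟩
    have hmem : (C (l j) : S) + (σ (l j) + x) ∈ A := hC (l j)
    rw [htc j] at hmem
    have key : (tc : S) + x + sgSum H f hH = (tc : S) + (σ (l j) + x) := by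
      apply WithZero.coe_inj.mp
      rw [WithZero.coe_add, WithZero.coe_add, WithZero.coe_add, WithZero.coe_add,
        hsumH, hval j, hK]
      simp only [Finset.sum_empty, add_zero]
      abel
    rw [key]; exact hmem
  · have hKne : H'ᶜ.Nonempty := Finset.nonempty_iff_ne_empty.mpr hK
    refine ⟨(tc : S) + sgSum H'ᶜ d hKne + x, H, hH, fun f hf => ?_⟩
    set j : {f // f ∈ F} := ⟨f, hf⟩
    have hmem : (C (l j) : S) + (σ (l j) + x) ∈ A := hC (l j)
    rw [htc j] at hmem
    have key : (tc : S) + sgSum H'ᶜ d hKne + x + sgSum H f hH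
        = (tc : S) + (σ (l j) + x) := by
      apply WithZero.coe_inj.mp
      rw [WithZero.coe_add, WithZero.coe_add, WithZero.coe_add, WithZero.coe_add,
        WithZero.coe_add, hsumH, hval j, coe_sgSum]
      abel
    rw [key]; exact hmem
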